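/- Let $k$ be a field of characteristic $p > 0$. The quotient $k\langle x, d\rangle/(dx - xd - 1,\ x^p,\ d^p)$ of the Weyl algebra by the central elements $x^p$ and $d^p$ is isomorphic as a $k$-algebra to the algebra of $p \times p$ matrices over $k$. -/

import Mathlib

open Matrix

variable {k : Type} [Field k] {p : ℕ}

section matrices
variable (k p)

def Xm : Matrix (Fin p) (Fin p) k := Matrix.of fun i j => if (i : ℕ) = (j : ℕ) + 1 then 1 else 0

def Dm : Matrix (Fin p) (Fin p) k := Matrix.of fun i j => if (j : ℕ) = (i : ℕ) + 1 then ((j : ℕ) : k) else 0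

end matrices

@[simp] lemma fin_val_mk' {n a : ℕ} (h : a < n) : ((⟨a, h⟩ : Fin n) : ℕ) = a := rfl

lemma sum_fin_eq {M : Type} [AddCommMonoid M] (m : ℕ) (g : Fin p → M) :
    (∑ l : Fin p, if (l : ℕ) = m then g l else 0) = if h : m < p then g ⟨m, h⟩ else 0 := by
  split_ifs with h
  · rw [Finset.sum_eq_single (⟨m, h⟩ : Fin p)]
    · simp
    · intro b _ hb
      rw [if_neg]
      simpa [Fin.ext_iff] using hb
    · simp
  · apply Finset.sum_eq_zero
    intro l _
    rw [if_neg]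
    exact fun hl => h (hl ▸ l.isLt)

lemma sum_fin_succ_eq {M : Type} [AddCommMonoid M] (m : ℕ) (g : Fin p → M) :
    (∑ l : Fin p, if m = (l : ℕ) + 1 then g l else 0)
      = if h : m - 1 < p ∧ m ≠ 0 then g ⟨m - 1, h.1⟩ else 0 := by
  cases m with
  | zero => simp
  | succ n =>
    rw [show (∑ l : Fin p, if n + 1 = (l : ℕ) + 1 then g l else 0)
        = ∑ l : Fin p, if (l : ℕ) = n then g l else 0 from
      Finset.sum_congr rfl fun l _ => if_congr (by omega) rfl rfl, sum_fin_eq]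
    by_cases h : n < p <;> simp [h]

lemma XD_eq : Xm k p * Dm k p = Matrix.diagonal (fun i : Fin p => ((i : ℕ) : k)) := by
  ext i j
  simp only [Matrix.mul_apply, Xm, Dm, Matrix.of_apply, ite_mul, one_mul, zero_mul]
  rw [show (∑ l : Fin p, if (i : ℕ) = (l : ℕ) + 1 then (if (j : ℕ) = (l : ℕ) + 1 then ((j:ℕ):k) else 0) else 0)
      = ∑ l : Fin p, if (i:ℕ) = (l : ℕ) + 1 then (fun l : Fin p => (if (j : ℕ) = (l : ℕ) + 1 then ((j:ℕ):k) else 0)) l else 0 from rfl,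
    sum_fin_succ_eq]
  rcases eq_or_ne i j with rfl | hij
  · simp only [Matrix.diagonal_apply_eq]
    by_cases h : (i : ℕ) = 0
    · simp [h]
    · have : (i:ℕ) - 1 < p ∧ (i:ℕ) ≠ 0 := ⟨lt_of_le_of_lt (Nat.pred_le _) i.isLt, h⟩
      simp only [dif_pos this, fin_val_mk']
      rw [if_pos (by omega)]
  · rw [Matrix.diagonal_apply_ne _ hij]
    split_ifs with h h2
    · exfalso
      simp only [fin_val_mk'] at h2
      exact hij (Fin.ext (by omega))
    · rfl
    · rfl

lemma weyl_matrix (hp : p.Prime) [CharP k p] : Dm k p * Xm k p = Xm k p * Dm k p + 1 := by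
  ext i j
  rw [XD_eq]
  simp only [Matrix.mul_apply, Xm, Dm, Matrix.of_apply, ite_mul, zero_mul, mul_ite, mul_one,
    mul_zero, Matrix.add_apply, Matrix.one_apply, Matrix.diagonal_apply]
  rw [sum_fin_eq ((j:ℕ)+1) (fun l => if (l : ℕ) = (i : ℕ) + 1 then ((l:ℕ):k) else 0)]
  rcases eq_or_ne i j with rfl | hij
  · simp only [if_pos rfl]
    by_cases h : (i : ℕ) + 1 < p
    · simp only [dif_pos h, fin_val_mk']
      simp only [if_true]
      push_cast
      ring
    · have hi : (i : ℕ) + 1 = p := by omega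
      rw [dif_neg h]
      have h0 : ((i:ℕ) : k) + 1 = 0 := by
        have hc := CharP.cast_eq_zero k p
        rw [← hi] at hc
        push_cast at hc
        exact hc
      exact h0.symm
  · have hij' : (i:ℕ) ≠ (j:ℕ) := by simpa [Fin.ext_iff] using hij
    rw [if_neg hij]
    split_ifs with h h2
    · exfalso
      simp only [fin_val_mk'] at h2
      omega
    · ring
    · ring

lemma Dm_pow_apply (m : ℕ) (i j : Fin p) (h : (j:ℕ) ≠ (i:ℕ) + m) : (Dm k p ^ m) i j = 0 := by
  induction m generalizing j with
  | zero =>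
    rw [pow_zero, Matrix.one_apply_ne (fun hij => h (by rw [hij]; omega))]
  | succ n ih =>
    rw [pow_succ, Matrix.mul_apply]
    apply Finset.sum_eq_zero
    intro l _
    by_cases hl : (j:ℕ) = (l:ℕ) + 1
    · rw [ih l (by omega), zero_mul]
    · rw [show Dm k p l j = 0 from if_neg hl, mul_zero]

lemma Xm_pow_apply (m : ℕ) (i j : Fin p) (h : (i:ℕ) ≠ (j:ℕ) + m) : (Xm k p ^ m) i j = 0 := by
  induction m generalizing j with
  | zero =>
    rw [pow_zero, Matrix.one_apply_ne (fun hij => h (by rw [hij]; omega))]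
  | succ n ih =>
    rw [pow_succ, Matrix.mul_apply]
    apply Finset.sum_eq_zero
    intro l _
    by_cases hl : (l:ℕ) = (j:ℕ) + 1
    · rw [ih l (by omega), zero_mul]
    · rw [show Xm k p l j = 0 from if_neg hl, mul_zero]

lemma Dm_pow_p : Dm k p ^ p = 0 := by
  ext i j
  rw [Dm_pow_apply p i j (by omega)]
  rfl

lemma Xm_pow_p : Xm k p ^ p = 0 := by
  ext i j
  rw [Xm_pow_apply p i j (by omega)]
  rfl

lemma fermat_nat (hp : p.Prime) [CharP k p] (n : ℕ) (h : ¬ p ∣ n) : ((n : k)) ^ (p - 1) = 1 := by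
  haveI := Fact.mk hp
  have hn : (n : k) = ZMod.castHom (dvd_refl p) k (n : ZMod p) := by simp
  rw [hn, ← map_pow, ZMod.pow_card_sub_one_eq_one (by
    simpa [ZMod.natCast_eq_zero_iff] using h), _root_.map_one]

lemma E00_eq (hp : p.Prime) [CharP k p] :
    1 - (Xm k p * Dm k p) ^ (p - 1) = Matrix.single (⟨0, hp.pos⟩ : Fin p) (⟨0, hp.pos⟩ : Fin p) (1 : k) := by
  rw [XD_eq, Matrix.diagonal_pow]
  ext i j
  rcases eq_or_ne i j with rfl | hij
  · simp only [Matrix.sub_apply, Matrix.one_apply_eq, Matrix.diagonal_apply_eq, Pi.pow_apply]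
    by_cases h : (i : ℕ) = 0
    · have : i = ⟨0, hp.pos⟩ := Fin.ext h
      subst this
      simp [zero_pow (Nat.sub_ne_zero_of_lt hp.one_lt)]
    · rw [fermat_nat hp _ (fun hd => h (Nat.eq_zero_of_dvd_of_lt hd i.isLt)),
        Matrix.single_apply_of_ne, sub_self]
      intro ⟨h1, _⟩
      exact h (by rw [← h1])
  · simp only [Matrix.sub_apply, Matrix.one_apply_ne hij, Matrix.diagonal_apply_ne _ hij,
      sub_zero, Pi.pow_apply]
    rw [Matrix.single_apply_of_ne]
    rintro ⟨rfl, rfl⟩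
    exact hij rfl

lemma E0_step (hp : p.Prime) (n : ℕ) (h : n + 1 < p) :
    Matrix.single (⟨0, hp.pos⟩ : Fin p) (⟨n, by omega⟩ : Fin p) (1 : k) * Dm k p
      = ((n + 1 : ℕ) : k) • Matrix.single (⟨0, hp.pos⟩ : Fin p) (⟨n + 1, h⟩ : Fin p) (1 : k) := by
  ext i j
  rw [Matrix.smul_apply]
  rcases eq_or_ne i (⟨0, hp.pos⟩ : Fin p) with rfl | hi
  · rw [Matrix.single_mul_apply_same, one_mul]
    by_cases hj : (j : ℕ) = n + 1
    · have : j = ⟨n + 1, h⟩ := Fin.ext hj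
      subst this
      rw [show Dm k p ⟨n, by omega⟩ ⟨n + 1, h⟩ = ((n + 1 : ℕ) : k) from if_pos rfl,
        Matrix.single_apply_same, smul_eq_mul, mul_one]
    · rw [show Dm k p ⟨n, by omega⟩ j = 0 from if_neg (by simpa using hj),
        Matrix.single_apply_of_ne, smul_zero]
      rintro ⟨-, rfl⟩
      simp at hj
  · rw [Matrix.single_mul_apply_of_ne (h := hi),
      Matrix.single_apply_of_row_ne (Ne.symm hi), smul_zero]

lemma E00_Dpow (hp : p.Prime) (b : ℕ) (hb : b < p) :
    Matrix.single (⟨0, hp.pos⟩ : Fin p) (⟨0, hp.pos⟩ : Fin p) (1 : k) * Dm k p ^ b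
      = (b.factorial : k) • Matrix.single (⟨0, hp.pos⟩ : Fin p) (⟨b, hb⟩ : Fin p) (1 : k) := by
  induction b with
  | zero => simp
  | succ n ih =>
    rw [pow_succ, ← mul_assoc, ih (by omega), smul_mul_assoc, E0_step hp n hb, smul_smul]
    congr 1
    push_cast [Nat.factorial_succ]
    ring

lemma Xpow_E00 (hp : p.Prime) (a : ℕ) (ha : a < p) :
    Xm k p ^ a * Matrix.single (⟨0, hp.pos⟩ : Fin p) (⟨0, hp.pos⟩ : Fin p) (1 : k)
      = Matrix.single (⟨a, ha⟩ : Fin p) (⟨0, hp.pos⟩ : Fin p) (1 : k) := by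
  induction a with
  | zero => simp
  | succ n ih =>
    rw [pow_succ', mul_assoc, ih (by omega)]
    ext i j
    rcases eq_or_ne j (⟨0, hp.pos⟩ : Fin p) with rfl | hj
    · rw [Matrix.mul_single_apply_same, mul_one]
      by_cases hi : (i : ℕ) = n + 1
      · have : i = ⟨n + 1, ha⟩ := Fin.ext hi
        subst this
        rw [show Xm k p ⟨n + 1, ha⟩ ⟨n, by omega⟩ = (1 : k) from if_pos rfl,
          Matrix.single_apply_same]
      · rw [show Xm k p i ⟨n, by omega⟩ = 0 from if_neg (by simpa using hi),
          Matrix.single_apply_of_ne]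
        rintro ⟨rfl, -⟩
        simp at hi
    · rw [Matrix.mul_single_apply_of_ne (hbj := hj),
        Matrix.single_apply_of_col_ne _ _ (Ne.symm hj)]


/-- Relations `d * x = x * d + 1`, `x^p = 0`, `d^p = 0`
(generator `false` is `x`, generator `true` is `d`). -/
inductive RestWeylRel (k : Type) [Field k] (p : ℕ) :
    FreeAlgebra k Bool → FreeAlgebra k Bool → Prop
  | weyl : RestWeylRel k p (FreeAlgebra.ι k true * FreeAlgebra.ι k false)
      (FreeAlgebra.ι k false * FreeAlgebra.ι k true + 1)
  | xp : RestWeylRel k p (FreeAlgebra.ι k false ^ p) 0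
  | dp : RestWeylRel k p (FreeAlgebra.ι k true ^ p) 0

variable (k p) in
noncomputable def fMat (hp : p.Prime) [CharP k p] :
    RingQuot (RestWeylRel k p) →ₐ[k] Matrix (Fin p) (Fin p) k :=
  RingQuot.liftAlgHom k ⟨FreeAlgebra.lift k (fun b => if b then Dm k p else Xm k p), by
    intro a b r
    cases r with
    | weyl => simp [weyl_matrix hp]
    | xp => simp [Xm_pow_p]
    | dp => simp [Dm_pow_p]⟩

section quot
variable [CharP k p] (hp : p.Prime)

local notation "A" => RingQuot (RestWeylRel k p)

noncomputable def xq : RingQuot (RestWeylRel k p) :=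
  RingQuot.mkAlgHom k (RestWeylRel k p) (FreeAlgebra.ι k false)

noncomputable def dq : RingQuot (RestWeylRel k p) :=
  RingQuot.mkAlgHom k (RestWeylRel k p) (FreeAlgebra.ι k true)

lemma hweyl : dq (k := k) (p := p) * xq = xq * dq + 1 := by
  have := RingQuot.mkAlgHom_rel k (RestWeylRel.weyl (k := k) (p := p))
  simpa [xq, dq, _root_.map_mul, map_add, _root_.map_one] using this

lemma hxp : xq (k := k) (p := p) ^ p = 0 := by
  have := RingQuot.mkAlgHom_rel k (RestWeylRel.xp (k := k) (p := p))
  simpa [xq, map_pow] using this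

lemma hdp : dq (k := k) (p := p) ^ p = 0 := by
  have := RingQuot.mkAlgHom_rel k (RestWeylRel.dp (k := k) (p := p))
  simpa [dq, map_pow] using this

lemma fMat_x : fMat k p hp (xq) = Xm k p := by
  rw [xq, fMat, RingQuot.liftAlgHom_mkAlgHom_apply]
  simp

lemma fMat_d : fMat k p hp (dq) = Dm k p := by
  rw [dq, fMat, RingQuot.liftAlgHom_mkAlgHom_apply]
  simp

lemma dpow_x (n : ℕ) :
    dq (k := k) (p := p) ^ (n + 1) * xq = xq * dq ^ (n + 1) + (n + 1 : ℕ) • dq ^ n := by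
  induction n with
  | zero => simpa using hweyl
  | succ m ih =>
    calc dq (k := k) (p := p) ^ (m + 1 + 1) * xq
        = dq * (dq ^ (m + 1) * xq) := by rw [← mul_assoc, ← pow_succ']
      _ = dq * (xq * dq ^ (m + 1)) + (m + 1 : ℕ) • (dq * dq ^ m) := by
          rw [ih, mul_add, mul_smul_comm]
      _ = (dq * xq) * dq ^ (m + 1) + (m + 1 : ℕ) • dq ^ (m + 1) := by
          rw [← mul_assoc, ← pow_succ']
      _ = xq * (dq * dq ^ (m + 1)) + dq ^ (m + 1) + (m + 1 : ℕ) • dq ^ (m + 1) := by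
          rw [hweyl, add_mul, one_mul, mul_assoc]
      _ = xq * dq ^ (m + 1 + 1) + (m + 1 + 1 : ℕ) • dq ^ (m + 1) := by
          rw [← pow_succ']
          simp only [nsmul_eq_mul]
          push_cast
          noncomm_ring
end quot

lemma pow_ge_zero {R : Type} [MonoidWithZero R] {y : R} {n b : ℕ} (h : y ^ n = 0)
    (hb : n ≤ b) : y ^ b = 0 := by
  rw [show b = n + (b - n) by omega, pow_add, h, zero_mul]

section span
variable (k p) [CharP k p]

noncomputable def Sspan : Submodule k (RingQuot (RestWeylRel k p)) :=
  Submodule.span k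
    (Set.range fun ij : Fin p × Fin p => xq (k := k) (p := p) ^ (ij.1 : ℕ) * dq ^ (ij.2 : ℕ))

end span

variable [CharP k p]

lemma mem_S (a b : ℕ) : xq (k := k) (p := p) ^ a * dq ^ b ∈ Sspan k p := by
  by_cases ha : a < p
  · by_cases hb : b < p
    · exact Submodule.subset_span ⟨(⟨a, ha⟩, ⟨b, hb⟩), rfl⟩
    · rw [pow_ge_zero hdp (by omega), mul_zero]
      exact zero_mem _
  · rw [pow_ge_zero hxp (by omega), zero_mul]
    exact zero_mem _

lemma S_mul_x (a b : ℕ) : (xq (k := k) (p := p) ^ a * dq ^ b) * xq ∈ Sspan k p := by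
  cases b with
  | zero =>
    rw [pow_zero, mul_one, ← pow_succ]
    simpa using mem_S (a + 1) 0
  | succ n =>
    rw [mul_assoc, dpow_x n, mul_add, ← mul_assoc, ← pow_succ, mul_smul_comm]
    exact add_mem (mem_S (a + 1) (n + 1)) (Submodule.smul_mem _ _ (mem_S a n))

lemma S_mul_d (a b : ℕ) : (xq (k := k) (p := p) ^ a * dq ^ b) * dq ∈ Sspan k p := by
  rw [mul_assoc, ← pow_succ]
  exact mem_S a (b + 1)

lemma S_top : Sspan k p = ⊤ := by
  have hadj : ∀ g : RingQuot (RestWeylRel k p),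
      g ∈ Algebra.adjoin k (Set.range fun b : Bool =>
        RingQuot.mkAlgHom k (RestWeylRel k p) (FreeAlgebra.ι k b)) := by
    intro g
    obtain ⟨y, rfl⟩ := RingQuot.mkAlgHom_surjective k (RestWeylRel k p) g
    have h1 : (Algebra.adjoin k (Set.range (FreeAlgebra.ι k : Bool → FreeAlgebra k Bool))).map
        (RingQuot.mkAlgHom k (RestWeylRel k p))
        = Algebra.adjoin k (Set.range fun b : Bool =>
            RingQuot.mkAlgHom k (RestWeylRel k p) (FreeAlgebra.ι k b)) := by
      rw [AlgHom.map_adjoin, ← Set.range_comp]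
      rfl
    rw [← h1]
    exact ⟨y, by rw [FreeAlgebra.adjoin_range_ι]; trivial, rfl⟩
  have key : ∀ g m : RingQuot (RestWeylRel k p), m ∈ Sspan k p → m * g ∈ Sspan k p := by
    intro g
    induction hadj g using Algebra.adjoin_induction with
    | mem z hz =>
      obtain ⟨b, rfl⟩ := hz
      intro m hm
      induction hm using Submodule.span_induction with
      | mem w hw =>
        obtain ⟨⟨i, j⟩, rfl⟩ := hw
        cases b
        · exact S_mul_x (i : ℕ) (j : ℕ)
        · exact S_mul_d (i : ℕ) (j : ℕ)
      | zero => simp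
      | add u v _ _ hu hv => rw [add_mul]; exact add_mem hu hv
      | smul c u _ hu => rw [smul_mul_assoc]; exact Submodule.smul_mem _ _ hu
    | algebraMap r =>
      intro m hm
      rw [← Algebra.commutes r m, ← Algebra.smul_def]
      exact Submodule.smul_mem _ _ hm
    | add u v _ _ ihu ihv =>
      intro m hm
      rw [mul_add]
      exact add_mem (ihu m hm) (ihv m hm)
    | mul u v _ _ ihu ihv =>
      intro m hm
      rw [← mul_assoc]
      exact ihv _ (ihu m hm)
  rw [eq_top_iff]
  intro a _
  have h1 : (1 : RingQuot (RestWeylRel k p)) ∈ Sspan k p := by simpa using mem_S 0 0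
  simpa using key a 1 h1

lemma std_formula (hp : p.Prime) [CharP k p] (i j : Fin p) :
    Xm k p ^ (i : ℕ) * (1 - (Xm k p * Dm k p) ^ (p - 1)) * Dm k p ^ (j : ℕ)
      = (((j : ℕ).factorial : k)) • Matrix.single i j (1 : k) := by
  rw [E00_eq hp]
  have he : Matrix.single (⟨0, hp.pos⟩ : Fin p) (⟨0, hp.pos⟩ : Fin p) (1 : k)
      = Matrix.single (⟨0, hp.pos⟩ : Fin p) (⟨0, hp.pos⟩ : Fin p) (1 : k)
        * Matrix.single (⟨0, hp.pos⟩ : Fin p) (⟨0, hp.pos⟩ : Fin p) (1 : k) := by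
    rw [Matrix.single_mul_single_same, one_mul]
  rw [he, ← mul_assoc, mul_assoc _ _ (Dm k p ^ (j : ℕ)),
    mul_assoc (Xm k p ^ (i : ℕ)), ← mul_assoc (Xm k p ^ (i : ℕ)),
    Xpow_E00 hp _ i.isLt, E00_Dpow hp _ j.isLt, mul_smul_comm,
    Matrix.single_mul_single_same, one_mul]

theorem statement7_aux (k : Type) [Field k] (p : ℕ) (hp : p.Prime) [CharP k p] :
    Nonempty (RingQuot (RestWeylRel k p) ≃ₐ[k] Matrix (Fin p) (Fin p) k) := by
  classical
  have hsurj : Function.Surjective (fMat k p hp) := by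
    have hstd : ∀ (i j : Fin p) (c : k), Matrix.single i j c ∈ (fMat k p hp).range := by
      intro i j c
      rw [AlgHom.mem_range]
      refine ⟨(c * (((j : ℕ).factorial : k))⁻¹) •
        (xq ^ (i : ℕ) * (1 - (xq * dq) ^ (p - 1)) * dq ^ (j : ℕ)), ?_⟩
      have hfac : (((j : ℕ).factorial : k)) ≠ 0 := by
        rw [Ne, CharP.cast_eq_zero_iff k p, hp.dvd_factorial]
        omega
      rw [_root_.map_smul, _root_.map_mul, _root_.map_mul, map_sub, _root_.map_one, map_pow,
        map_pow, map_pow, _root_.map_mul, fMat_x hp, fMat_d hp, std_formula hp, smul_smul]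
      rw [mul_assoc, inv_mul_cancel₀ hfac, mul_one, Matrix.smul_single, smul_eq_mul,
        mul_one]
    intro M
    have hM : M ∈ (fMat k p hp).range := by
      induction M using Matrix.induction_on' with
      | h_zero => exact zero_mem _
      | h_add P Q hP hQ => exact add_mem hP hQ
      | h_std_basis i j c => exact hstd i j c
    exact hM
  have hspan : Submodule.span k (Set.range fun ij : Fin p × Fin p =>
      xq (k := k) (p := p) ^ (ij.1 : ℕ) * dq ^ (ij.2 : ℕ)) = ⊤ := S_top (k := k) (p := p)
  haveI hfin : Module.Finite k (RingQuot (RestWeylRel k p)) := by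
    rw [Module.finite_def, Submodule.fg_def]
    exact ⟨_, Set.finite_range _, hspan⟩
  have hA : Module.finrank k (RingQuot (RestWeylRel k p)) ≤ p * p := by
    calc Module.finrank k (RingQuot (RestWeylRel k p))
        = Module.finrank k (⊤ : Submodule k (RingQuot (RestWeylRel k p))) :=
          (finrank_top k _).symm
      _ = Module.finrank k (Submodule.span k (Set.range fun ij : Fin p × Fin p =>
            xq (k := k) (p := p) ^ (ij.1 : ℕ) * dq ^ (ij.2 : ℕ))) := by rw [hspan]
      _ ≤ _ := finrank_span_le_card _
      _ ≤ p * p := by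
          rw [Set.toFinset_range]
          refine le_trans Finset.card_image_le ?_
          simp
  have hM : Module.finrank k (Matrix (Fin p) (Fin p) k) = p * p := by
    rw [Module.finrank_matrix]
    simp
  have hrank := LinearMap.finrank_range_add_finrank_ker (fMat k p hp).toLinearMap
  have hrtop : LinearMap.range (fMat k p hp).toLinearMap = ⊤ := LinearMap.range_eq_top.mpr hsurj
  rw [hrtop, finrank_top] at hrank
  have hker : LinearMap.ker (fMat k p hp).toLinearMap = ⊥ := by
    apply Submodule.finrank_eq_zero.mp
    omega
  have hinj : Function.Injective (fMat k p hp) := LinearMap.ker_eq_bot.mp hker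
  exact ⟨AlgEquiv.ofBijective (fMat k p hp) ⟨hinj, hsurj⟩⟩

/-- The quotient of the Weyl algebra in characteristic `p` by the central elements
`x^p` and `d^p` is isomorphic to the algebra of `p × p` matrices over `k`. -/
theorem statement7 (k : Type) [Field k] (p : ℕ) (hp : p.Prime) [CharP k p] :
    Nonempty (RingQuot (RestWeylRel k p) ≃ₐ[k] Matrix (Fin p) (Fin p) k) := by
  exact statement7_aux k p hp
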